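/- Let λ0, λ1 > 0 with 2λ = λ0 + λ1, and let ψ0, ψ1 ∈ ℂ with Re ψ0 ≥ 0, Re ψ1 ≥ 0, ψ0 ≠ λ1 and ψ1 ≠ λ0, and let ĝ0, ĝ1 ∈ ℂ. Define Φ0(t) = e^{−t(λ0+ψ0)} ĝ0 + (λ0 λ1/(2λ)) (Φ00(t) ĝ0 + Φ01(t) ĝ1) and Φ1(t) = e^{−t(λ1+ψ1)} ĝ1 + (λ0 λ1/(2λ)) (Φ10(t) ĝ0 + Φ11(t) ĝ1). Then as t → ∞ both Φ0(t) and Φ1(t) converge to Φ∞ := (λ0 λ1/(λ0+λ1)) ( ĝ0/(λ0+ψ0) + ĝ1/(λ1+ψ1) ). -/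

import Mathlib

open Filter Topology

lemma exp_decay_aux (c : ℂ) (hc : 0 < c.re) :
    Tendsto (fun t : ℝ => Complex.exp (-c * t)) atTop (𝓝 0) := by
  rw [tendsto_zero_iff_norm_tendsto_zero]
  have h1 : ∀ t : ℝ, ‖Complex.exp (-c * t)‖ = Real.exp (-(c.re * t)) := by
    intro t
    rw [Complex.norm_exp]
    congr 1
    simp [Complex.mul_re]
  simp only [h1]
  have h2 : Tendsto (fun t : ℝ => c.re * t) atTop atTop :=
    tendsto_id.const_mul_atTop hc
  exact Real.tendsto_exp_atBot.comp (tendsto_neg_atTop_atBot.comp h2)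

/-- Theorem 2.3 (analytic content): convergence of the characteristic functions
`Φ0(t), Φ1(t)` of the Kac–Lévy process with renewal starting points, as `t → ∞`,
to the Fourier transform `Φ∞` of the limiting mixture distribution. -/
theorem kac_levy_renewal_limit
    (l0 l1 : ℝ) (hl0 : 0 < l0) (hl1 : 0 < l1)
    (ψ0 ψ1 : ℂ) (hψ0 : 0 ≤ ψ0.re) (hψ1 : 0 ≤ ψ1.re)
    (h2 : ψ0 ≠ (l1 : ℂ)) (h3 : ψ1 ≠ (l0 : ℂ))
    (g0 g1 : ℂ)
    (Φ00 Φ01 Φ10 Φ11 Φ0 Φ1 : ℝ → ℂ)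
    (hΦ00 : ∀ t, Φ00 t =
      (1 - Complex.exp (-((l0 : ℂ) + ψ0) * t)) / ((l0 : ℂ) + ψ0)
        - (Complex.exp (-((l0 + l1 : ℝ) : ℂ) * t)
            - Complex.exp (-((l0 : ℂ) + ψ0) * t)) / (ψ0 - (l1 : ℂ)))
    (hΦ01 : ∀ t, Φ01 t =
      (1 - Complex.exp (-((l1 : ℂ) + ψ1) * t)) / ((l1 : ℂ) + ψ1)
        + ((l0 : ℂ) / (l1 : ℂ)) * (Complex.exp (-((l0 + l1 : ℝ) : ℂ) * t)
            - Complex.exp (-((l1 : ℂ) + ψ1) * t)) / (ψ1 - (l0 : ℂ)))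
    (hΦ10 : ∀ t, Φ10 t =
      (1 - Complex.exp (-((l0 : ℂ) + ψ0) * t)) / ((l0 : ℂ) + ψ0)
        + ((l1 : ℂ) / (l0 : ℂ)) * (Complex.exp (-((l0 + l1 : ℝ) : ℂ) * t)
            - Complex.exp (-((l0 : ℂ) + ψ0) * t)) / (ψ0 - (l1 : ℂ)))
    (hΦ11 : ∀ t, Φ11 t =
      (1 - Complex.exp (-((l1 : ℂ) + ψ1) * t)) / ((l1 : ℂ) + ψ1)
        - (Complex.exp (-((l0 + l1 : ℝ) : ℂ) * t)
            - Complex.exp (-((l1 : ℂ) + ψ1) * t)) / (ψ1 - (l0 : ℂ)))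
    (hΦ0 : ∀ t, Φ0 t =
      Complex.exp (-(t : ℂ) * ((l0 : ℂ) + ψ0)) * g0
        + ((l0 * l1 : ℝ) : ℂ) / ((l0 + l1 : ℝ) : ℂ) * (Φ00 t * g0 + Φ01 t * g1))
    (hΦ1 : ∀ t, Φ1 t =
      Complex.exp (-(t : ℂ) * ((l1 : ℂ) + ψ1)) * g1
        + ((l0 * l1 : ℝ) : ℂ) / ((l0 + l1 : ℝ) : ℂ) * (Φ10 t * g0 + Φ11 t * g1)) :
    Tendsto Φ0 atTop (𝓝 (((l0 * l1 : ℝ) : ℂ) / ((l0 + l1 : ℝ) : ℂ)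
        * (g0 / ((l0 : ℂ) + ψ0) + g1 / ((l1 : ℂ) + ψ1)))) ∧
    Tendsto Φ1 atTop (𝓝 (((l0 * l1 : ℝ) : ℂ) / ((l0 + l1 : ℝ) : ℂ)
        * (g0 / ((l0 : ℂ) + ψ0) + g1 / ((l1 : ℂ) + ψ1)))) := by
  set A : ℂ := (l0 : ℂ) + ψ0 with hA
  set B : ℂ := (l1 : ℂ) + ψ1 with hB
  set K : ℂ := ((l0 * l1 : ℝ) : ℂ) / ((l0 + l1 : ℝ) : ℂ) with hK
  have hE0 : Tendsto (fun t : ℝ => Complex.exp (-A * t)) atTop (𝓝 0) :=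
    exp_decay_aux A (by simp [hA]; linarith)
  have hE1 : Tendsto (fun t : ℝ => Complex.exp (-B * t)) atTop (𝓝 0) :=
    exp_decay_aux B (by simp [hB]; linarith)
  have hE2 : Tendsto (fun t : ℝ => Complex.exp (-((l0 + l1 : ℝ) : ℂ) * t)) atTop (𝓝 0) :=
    exp_decay_aux _ (by simp; linarith)
  have hE0' : Tendsto (fun t : ℝ => Complex.exp (-(t : ℂ) * A)) atTop (𝓝 0) :=
    hE0.congr fun t => by ring_nf
  have hE1' : Tendsto (fun t : ℝ => Complex.exp (-(t : ℂ) * B)) atTop (𝓝 0) :=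
    hE1.congr fun t => by ring_nf
  have h00 : Tendsto (fun t : ℝ =>
      (1 - Complex.exp (-A * t)) / A
        - (Complex.exp (-((l0 + l1 : ℝ) : ℂ) * t) - Complex.exp (-A * t)) / (ψ0 - (l1 : ℂ)))
      atTop (𝓝 ((1 - 0) / A - (0 - 0) / (ψ0 - (l1 : ℂ)))) :=
    ((tendsto_const_nhds.sub hE0).div_const _).sub ((hE2.sub hE0).div_const _)
  have h01 : Tendsto (fun t : ℝ =>
      (1 - Complex.exp (-B * t)) / B
        + ((l0 : ℂ) / (l1 : ℂ)) * (Complex.exp (-((l0 + l1 : ℝ) : ℂ) * t)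
            - Complex.exp (-B * t)) / (ψ1 - (l0 : ℂ)))
      atTop (𝓝 ((1 - 0) / B + ((l0 : ℂ) / (l1 : ℂ)) * (0 - 0) / (ψ1 - (l0 : ℂ)))) :=
    ((tendsto_const_nhds.sub hE1).div_const _).add
      ((((hE2.sub hE1).const_mul _)).div_const _)
  have h10 : Tendsto (fun t : ℝ =>
      (1 - Complex.exp (-A * t)) / A
        + ((l1 : ℂ) / (l0 : ℂ)) * (Complex.exp (-((l0 + l1 : ℝ) : ℂ) * t)
            - Complex.exp (-A * t)) / (ψ0 - (l1 : ℂ)))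
      atTop (𝓝 ((1 - 0) / A + ((l1 : ℂ) / (l0 : ℂ)) * (0 - 0) / (ψ0 - (l1 : ℂ)))) :=
    ((tendsto_const_nhds.sub hE0).div_const _).add
      ((((hE2.sub hE0).const_mul _)).div_const _)
  have h11 : Tendsto (fun t : ℝ =>
      (1 - Complex.exp (-B * t)) / B
        - (Complex.exp (-((l0 + l1 : ℝ) : ℂ) * t) - Complex.exp (-B * t)) / (ψ1 - (l0 : ℂ)))
      atTop (𝓝 ((1 - 0) / B - (0 - 0) / (ψ1 - (l0 : ℂ)))) :=
    ((tendsto_const_nhds.sub hE1).div_const _).sub ((hE2.sub hE1).div_const _)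
  constructor
  · have big := (hE0'.mul_const g0).add
      (((h00.mul_const g0).add (h01.mul_const g1)).const_mul K)
    have hL : (0 : ℂ) * g0 + K * (((1 - 0) / A - (0 - 0) / (ψ0 - (l1 : ℂ))) * g0
        + ((1 - 0) / B + ((l0 : ℂ) / (l1 : ℂ)) * (0 - 0) / (ψ1 - (l0 : ℂ))) * g1)
        = K * (g0 / A + g1 / B) := by ring
    rw [← hL]
    exact big.congr fun t => by rw [hΦ0 t, hΦ00 t, hΦ01 t]
  · have big := (hE1'.mul_const g1).add
      (((h10.mul_const g0).add (h11.mul_const g1)).const_mul K)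
    have hL : (0 : ℂ) * g1 + K * (((1 - 0) / A + ((l1 : ℂ) / (l0 : ℂ)) * (0 - 0) / (ψ0 - (l1 : ℂ))) * g0
        + ((1 - 0) / B - (0 - 0) / (ψ1 - (l0 : ℂ))) * g1)
        = K * (g0 / A + g1 / B) := by ring
    rw [← hL]
    exact big.congr fun t => by rw [hΦ1 t, hΦ10 t, hΦ11 t]
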